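/- Let K be a finite field of characteristic p, f(X) = X^p − X + ξ ∈ K[X] irreducible over K, and γ a root of f in an extension of K. Then for any c, d ∈ K with c ≠ 0, the element ξ − (d/c)^p + (d/c) is nonzero and Tr_{K(γ)/K}(1/(γ + d/c)) = (ξ − (d/c)^p + (d/c))^{−1}. -/

import Mathlib

open Polynomial


-- helper: monic dvd monic of same natDegree => equal
lemma monic_eq_of_dvd {K : Type*} [Field K] {m g : K[X]} (hm : m.Monic) (hg : g.Monic)
    (hdvd : m ∣ g) (hdeg : g.natDegree ≤ m.natDegree) : m = g :=
  eq_of_monic_of_associated hm hg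
    (associated_of_dvd_of_natDegree_le hdvd hg.ne_zero hdeg)


/-- Let `K` be a finite field of characteristic `p`,
`f(X) = X^p - X + ξ ∈ K[X]` irreducible over `K`, and `γ` a root of `f` with `L = K(γ)`.
For any `c, d ∈ K` with `c ≠ 0`, the element `ξ - (d/c)^p + d/c` is nonzero and
`Tr_{K(γ)/K}(1/(γ + d/c)) = (ξ - (d/c)^p + d/c)⁻¹`. -/
theorem trace_inv_shifted_root (p : ℕ) [Fact p.Prime] (K L : Type*) [Field K] [Finite K]
    [CharP K p] [Field L] [Algebra K L] [FiniteDimensional K L] (ξ : K)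
    (hirr : Irreducible (X ^ p - X + C ξ)) (γ : L)
    (hroot : γ ^ p - γ + algebraMap K L ξ = 0)
    (hgen : IntermediateField.adjoin K {γ} = ⊤)
    (c d : K) (hc : c ≠ 0) :
    ξ - (d / c) ^ p + d / c ≠ 0 ∧
      Algebra.trace K L (γ + algebraMap K L (d / c))⁻¹ = (ξ - (d / c) ^ p + d / c)⁻¹ := by
  have hp2 : 2 ≤ p := (Fact.out : p.Prime).two_le
  have hCP : CharP L p := charP_of_injective_algebraMap (algebraMap K L).injective p
  set e : K := d / c with he
  set ξ' : K := ξ - e ^ p + e with hξ'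
  set γ' : L := γ + algebraMap K L e with hγ'
  -- γ' is a root of X^p - X + C ξ'
  have hroot' : γ' ^ p - γ' + algebraMap K L ξ' = 0 := by
    have : γ' ^ p = γ ^ p + (algebraMap K L e) ^ p := add_pow_char γ (algebraMap K L e) p
    rw [hγ', hξ', this, map_add, map_sub, map_pow]
    linear_combination hroot
  -- monicity and degree facts
  have hdegaux : ∀ a : K, ((- X + C a : K[X])).degree < (X ^ p : K[X]).degree := by
    intro a
    rw [degree_X_pow]
    refine lt_of_le_of_lt (degree_add_le _ _) ?_
    simp only [degree_neg, degree_X]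
    refine max_lt ?_ (lt_of_le_of_lt (degree_C_le) ?_) <;>
      exact_mod_cast by omega
  have hmonic : ∀ a : K, (X ^ p - X + C a : K[X]).Monic := by
    intro a
    have : (X ^ p - X + C a : K[X]) = X ^ p + (-X + C a) := by ring
    rw [this]
    exact (monic_X_pow p).add_of_left (hdegaux a)
  have hndeg : ∀ a : K, (X ^ p - X + C a : K[X]).natDegree = p := by
    intro a
    have : (X ^ p - X + C a : K[X]) = X ^ p + (-X + C a) := by ring
    have hd : (X ^ p + (-X + C a) : K[X]).degree = p := by
      rw [degree_add_eq_left_of_degree_lt (hdegaux a), degree_X_pow]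
    rw [this]
    exact natDegree_eq_of_degree_eq_some hd
  -- minpoly of γ is f, so finrank K L = p
  have hγint : IsIntegral K γ := Algebra.IsIntegral.isIntegral γ
  have haevalγ : aeval γ (X ^ p - X + C ξ) = 0 := by
    simp only [map_add, map_sub, map_pow, aeval_X, aeval_C]
    exact hroot
  have hminγ : minpoly K γ = X ^ p - X + C ξ :=
    (minpoly.eq_of_irreducible_of_monic hirr haevalγ (hmonic ξ)).symm
  have hfinrank : Module.finrank K L = p := by
    rw [← IntermediateField.finrank_top', ← hgen, IntermediateField.adjoin.finrank hγint,
      hminγ, hndeg]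
  -- γ' generates L
  have hgen' : IntermediateField.adjoin K {γ'} = ⊤ := by
    rw [← top_le_iff, ← hgen, IntermediateField.adjoin_le_iff]
    intro x hx
    rw [Set.mem_singleton_iff] at hx
    rw [hx, show γ = γ' - algebraMap K L e by rw [hγ']; ring]
    exact sub_mem (IntermediateField.mem_adjoin_simple_self K γ')
      (IntermediateField.algebraMap_mem _ e)
  -- a generic step: if x generates L and g is monic of natDegree p annihilating x, minpoly = g
  have key : ∀ (x : L) (g : K[X]), IntermediateField.adjoin K {x} = ⊤ → g.Monic →
      g.natDegree = p → aeval x g = 0 → minpoly K x = g := by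
    intro x g hx hgm hgd hgz
    have hxint : IsIntegral K x := Algebra.IsIntegral.isIntegral x
    have hdvd : minpoly K x ∣ g := minpoly.dvd K x hgz
    have hdeg : (minpoly K x).natDegree = p := by
      rw [← IntermediateField.adjoin.finrank hxint, hx, IntermediateField.finrank_top', hfinrank]
    exact monic_eq_of_dvd (minpoly.monic hxint) hgm hdvd (by rw [hgd, hdeg])
  have hminγ' : minpoly K γ' = X ^ p - X + C ξ' := by
    refine key γ' _ hgen' (hmonic ξ') (hndeg ξ') ?_
    simp only [map_add, map_sub, map_pow, aeval_X, aeval_C]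
    exact hroot'
  -- ξ' ≠ 0
  have hξ'ne : ξ' ≠ 0 := by
    intro h0
    have hirr' : Irreducible (minpoly K γ') :=
      minpoly.irreducible (Algebra.IsIntegral.isIntegral γ')
    rw [hminγ', h0, map_zero, add_zero] at hirr'
    have hXdvd : (X : K[X]) ∣ X ^ p - X := ⟨X ^ (p - 1) - 1, by
      rw [mul_sub, mul_one, ← pow_succ']
      congr 1
      congr 1
      omega⟩
    obtain ⟨q, hq⟩ := hXdvd
    rcases hirr'.isUnit_or_isUnit hq with h | h
    · exact not_isUnit_X h
    · have := degree_eq_zero_of_isUnit h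
      have h2 : (X ^ p - X : K[X]).natDegree = p := by
        have := hndeg 0; rwa [map_zero, add_zero] at this
      have h3 : (X ^ p - X : K[X]).natDegree = (X : K[X]).natDegree + q.natDegree := by
        rw [hq, natDegree_mul X_ne_zero]
        · intro hq0; rw [hq0, mul_zero] at hq
          rw [hq] at h2; simp at h2; omega
      rw [natDegree_X, natDegree_eq_zero_iff_degree_le_zero.mpr this.le] at h3
      omega
  -- γ' ≠ 0
  have hγ'ne : γ' ≠ 0 := by
    intro h0
    rw [h0, zero_pow (by omega : p ≠ 0), sub_zero, zero_add] at hroot'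
    exact hξ'ne ((_root_.map_eq_zero (algebraMap K L)).mp hroot')
  -- the inverse generator α = γ'⁻¹
  set α : L := γ'⁻¹ with hα
  have hgenα : IntermediateField.adjoin K {α} = ⊤ := by
    rw [← top_le_iff, ← hgen', IntermediateField.adjoin_le_iff]
    intro x hx
    rw [Set.mem_singleton_iff] at hx
    rw [hx, show γ' = α⁻¹ by rw [hα, inv_inv]]
    exact inv_mem (IntermediateField.mem_adjoin_simple_self K α)
  clear_value e ξ' γ' α
  set g : K[X] := X ^ p - C ξ'⁻¹ * X ^ (p - 1) + C ξ'⁻¹ with hg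
  have hgdegaux : ((- (C ξ'⁻¹ * X ^ (p-1)) + C ξ'⁻¹ : K[X])).degree < (X ^ p : K[X]).degree := by
    rw [degree_X_pow]
    refine lt_of_le_of_lt (degree_add_le _ _) (max_lt ?_ (lt_of_le_of_lt degree_C_le ?_))
    · rw [degree_neg]
      refine lt_of_le_of_lt (degree_mul_le _ _) ?_
      refine lt_of_le_of_lt (add_le_add degree_C_le (degree_X_pow (p-1)).le) ?_
      rw [zero_add]
      exact_mod_cast by omega
    · exact_mod_cast by omega
  have hgeq : g = X ^ p + (- (C ξ'⁻¹ * X ^ (p-1)) + C ξ'⁻¹) := by rw [hg]; ring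
  have hgmonic : g.Monic := by
    rw [hgeq]; exact (monic_X_pow p).add_of_left hgdegaux
  have hgdeg : g.natDegree = p := by
    have hd : (X ^ p + (- (C ξ'⁻¹ * X ^ (p-1)) + C ξ'⁻¹) : K[X]).degree = p := by
      rw [degree_add_eq_left_of_degree_lt hgdegaux, degree_X_pow]
    rw [hgeq]
    exact natDegree_eq_of_degree_eq_some hd
  have hpow : γ' ^ p = γ' - algebraMap K L ξ' := by linear_combination hroot'
  have hpowsplit : γ' ^ p = γ' ^ (p-1) * γ' := by
    rw [← pow_succ]; congr 1; omega
  have htne : algebraMap K L ξ' ≠ 0 := by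
    simpa using hξ'ne
  have haevalα : aeval α g = 0 := by
    rw [hg]
    simp only [map_add, map_sub, map_mul, map_pow, aeval_X, aeval_C, map_inv₀]
    rw [hα, inv_pow, inv_pow]
    field_simp
    linear_combination γ' ^ (p-1) * hpow - hpowsplit
  have hminα : minpoly K α = g := key α g hgenα hgmonic hgdeg haevalα
  have hαint : IsIntegral K α := Algebra.IsIntegral.isIntegral α
  let B := Field.powerBasisOfFiniteOfSeparable K L
  have hmem : B.gen ∈ Algebra.adjoin K ({α} : Set L) := by
    have h1 := IntermediateField.adjoin_simple_toSubalgebra_of_isAlgebraic hαint.isAlgebraic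
    rw [hgenα, IntermediateField.top_toSubalgebra] at h1
    rw [← h1]
    exact Algebra.mem_top
  let pb := PowerBasis.ofAdjoinEqTop hαint (by
    rw [← top_le_iff, ← B.adjoin_gen_eq_top, Algebra.adjoin_le_iff, Set.singleton_subset_iff]
    exact hmem)
  have hpbgen : pb.gen = α := by
    exact PowerBasis.ofAdjoinEqTop_gen _ _
  have htr : Algebra.trace K L α = ξ'⁻¹ := by
    have h2 := PowerBasis.trace_gen_eq_nextCoeff_minpoly pb
    rw [hpbgen, hminα] at h2
    rw [h2, nextCoeff_of_natDegree_pos (by omega : 0 < g.natDegree), hgdeg, hg]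
    simp only [coeff_add, coeff_sub, coeff_X_pow, coeff_C_mul, coeff_C]
    have h1 : ¬ p = p - 1 := by omega
    have h2 : ¬ p - 1 = 0 := by omega
    have h3 : ¬ p - 1 = p := by omega
    simp [h1, h2, h3]
  exact ⟨hξ'ne, htr⟩
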